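/- For all integers r ≥ 1 and all integers m with 2 ≤ m ≤ r, one has C(r+1, 2m)·C(2m, m) ≠ r(r+1), where C(·,·) denotes the binomial coefficient (with C(a,b) = 0 when b > a). Moreover, if r ≥ 6 and m ≥ 2 satisfies 2m ≤ r+1, then C(r+1, 2m)·C(2m, m) > r(r+1). -/

import Mathlib

/-- Binomial coefficients are monotone in the lower argument up to the middle. -/
lemma aux_choose_mono_half {n k l : ℕ} (hkl : k ≤ l) (hl : 2 * l ≤ n) :
    Nat.choose n k ≤ Nat.choose n l := by
  induction l with
  | zero => simp_all
  | succ l ih =>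
    rcases Nat.eq_or_lt_of_le hkl with h | h
    · subst h; exact le_refl _
    · have h1 : k ≤ l := Nat.lt_succ_iff.mp h
      exact (ih h1 (by omega)).trans
        (Nat.choose_le_succ_of_lt_half_left (by omega))

lemma aux_choose_two_mul_two (n : ℕ) : Nat.choose n 2 * 2 = n * (n - 1) := by
  cases n with
  | zero => simp
  | succ k =>
    rw [Nat.succ_sub_one, Nat.choose_two_right, Nat.succ_sub_one]
    exact Nat.div_mul_cancel (by rw [Nat.mul_comm]; exact (Nat.even_mul_succ_self k).two_dvd)

lemma aux_gt : ∀ r m : ℕ, 6 ≤ r → 2 ≤ m → 2 * m ≤ r + 1 →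
    r * (r + 1) < Nat.choose (r + 1) (2 * m) * Nat.choose (2 * m) m := by
  intro r m hr hm hmr
  rw [Nat.choose_mul (n := r + 1) (by omega : m ≤ 2 * m)]
  have hmm : 2 * m - m = m := by omega
  rw [hmm]
  have hc : Nat.choose (r + 1) 2 * 2 = (r + 1) * r := by
    rw [aux_choose_two_mul_two, Nat.add_sub_cancel]
  have hA : Nat.choose (r + 1) 2 ≤ Nat.choose (r + 1) m :=
    aux_choose_mono_half hm (by omega)
  have hApos : 0 < Nat.choose (r + 1) 2 := Nat.choose_pos (by omega)
  rcases Nat.eq_or_lt_of_le hmr with h2 | h2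
  · -- boundary case 2m = r+1
    have hm4 : 4 ≤ m := by omega
    have hsub : r + 1 - m = m := by omega
    have hch : Nat.choose (r + 1) m = Nat.choose (2 * m) m := by rw [← h2]
    rw [hsub, Nat.choose_self, Nat.mul_one, hch]
    have h4 : Nat.choose (2 * m) 4 ≤ Nat.choose (2 * m) m :=
      aux_choose_mono_half (by omega) (by omega)
    have hmul : Nat.choose (2 * m) 4 * Nat.choose 4 2
        = Nat.choose (2 * m) 2 * Nat.choose (2 * m - 2) 2 :=
      Nat.choose_mul (by omega)
    have h6 : Nat.choose 4 2 = 6 := by decide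
    have h15 : 15 ≤ Nat.choose (2 * m - 2) 2 := by
      have : Nat.choose 6 2 = 15 := by decide
      calc 15 = Nat.choose 6 2 := this.symm
        _ ≤ Nat.choose (2 * m - 2) 2 := Nat.choose_le_choose 2 (by omega)
    have hc2 : Nat.choose (2 * m) 2 * 2 = 2 * m * (2 * m - 1) :=
      aux_choose_two_mul_two (2 * m)
    have hc2pos : 0 < Nat.choose (2 * m) 2 := Nat.choose_pos (by omega)
    have ht : r * (r + 1) = 2 * m * (2 * m - 1) := by
      rw [Nat.mul_comm, ← h2]; congr 1; omega
    rw [h6] at hmul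
    have hlt : r * (r + 1) < Nat.choose (2 * m) 4 := by nlinarith
    exact hlt.trans_le h4
  · -- case 2m < r+1
    have hB : 3 ≤ Nat.choose (r + 1 - m) m := by
      have e : Nat.choose (m + 1) m = m + 1 := Nat.choose_succ_self_right m
      calc 3 ≤ m + 1 := by omega
        _ = Nat.choose (m + 1) m := e.symm
        _ ≤ Nat.choose (r + 1 - m) m := Nat.choose_le_choose m (by omega)
    calc r * (r + 1) = Nat.choose (r + 1) 2 * 2 := by rw [hc, Nat.mul_comm]
      _ < Nat.choose (r + 1) 2 * 3 := by omega
      _ ≤ Nat.choose (r + 1) m * 3 := Nat.mul_le_mul_right 3 hA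
      _ ≤ Nat.choose (r + 1) m * Nat.choose (r + 1 - m) m :=
          Nat.mul_le_mul_left _ hB

/-- For `r ≥ 1` and `2 ≤ m ≤ r`, `C(r+1, 2m)·C(2m, m) ≠ r(r+1)`; moreover for `r ≥ 6`,
`m ≥ 2` with `2m ≤ r+1`, one has `C(r+1, 2m)·C(2m, m) > r(r+1)`. -/
theorem choose_products_ne_and_gt :
    (∀ r m : ℕ, 1 ≤ r → 2 ≤ m → m ≤ r →
      Nat.choose (r + 1) (2 * m) * Nat.choose (2 * m) m ≠ r * (r + 1)) ∧
    (∀ r m : ℕ, 6 ≤ r → 2 ≤ m → 2 * m ≤ r + 1 →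
      r * (r + 1) < Nat.choose (r + 1) (2 * m) * Nat.choose (2 * m) m) := by
  refine ⟨?_, aux_gt⟩
  intro r m h1 h2 h3
  rcases Nat.lt_or_ge (r + 1) (2 * m) with h | h
  · rw [Nat.choose_eq_zero_of_lt h, Nat.zero_mul]
    have : 0 < r * (r + 1) := Nat.mul_pos (by omega) (by omega)
    omega
  · rcases Nat.lt_or_ge r 6 with h6 | h6
    · interval_cases r <;> interval_cases m <;> decide
    · exact (aux_gt r m h6 h2 h).ne'
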